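/- The pointwise powers Ω^{⟨0⟩} = 𝟙, Ω^{⟨1⟩}, Ω^{⟨2⟩}, ... of the prime-counting function Ω are linearly independent over ℂ. Concretely, for every n, the value at 1 of the Wronskian determinant det(∂_2^j Ω^{⟨i⟩})_{0≤i,j≤n} with respect to the 2-basic derivation equals (∏_{j=0}^n j!)·det(j^i)_{0≤i,j≤n}, which is nonzero. -/

import Mathlib

open ArithmeticFunction
open scoped Classical

/-- The embedding of `ℂ` into the Dirichlet ring of arithmetic functions,
sending `c` to the function with value `c` at `1` and `0` elsewhere. -/
noncomputable def CC : ℂ →+* ArithmeticFunction ℂ where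
  toFun c := ⟨fun n => if n = 1 then c else 0, by simp⟩
  map_zero' := by ext n; simp
  map_one' := by ext n; simp [ArithmeticFunction.one_apply]
  map_add' a b := by ext n; by_cases h : n = 1 <;> erw [ArithmeticFunction.add_apply] <;> simp [h]
  map_mul' a b := by
    ext n
    erw [ArithmeticFunction.mul_apply]
    by_cases h : n = 1
    · subst h
      rw [show Nat.divisorsAntidiagonal 1 = {(1,1)} from rfl]
      simp
    · rw [Finset.sum_eq_zero]
      · simp [h]
      · rintro ⟨d, e⟩ hde
        rw [Nat.mem_divisorsAntidiagonal] at hde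
        rcases Decidable.eq_or_ne d 1 with hd | hd
        · have : e ≠ 1 := by rintro rfl; exact h (by simp [← hde.1, hd])
          simp [this]
        · simp [hd]

/-- The order `v f` of an arithmetic function: the least element of the support
(`sInf` of the empty set is `0` for `f = 0`; that case is always excluded by hypotheses). -/
noncomputable def ordN (f : ArithmeticFunction ℂ) : ℕ := sInf {n : ℕ | f n ≠ 0}

/-- The order as an extended natural number, `⊤` for `f = 0`. -/
noncomputable def ordE (f : ArithmeticFunction ℂ) : ℕ∞ :=
  sInf ((fun n : ℕ => (n : ℕ∞)) '' {n : ℕ | f n ≠ 0})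

/-- The norm `‖f‖ = 1/v(f)`, with `1/∞ = 0`. -/
noncomputable def nrm (f : ArithmeticFunction ℂ) : ℝ :=
  if f = 0 then 0 else 1 / (ordN f : ℝ)

/-- Extension of an arithmetic function to `ℝ`, vanishing off `ℕ`. -/
noncomputable def extR (f : ArithmeticFunction ℂ) (x : ℝ) : ℂ :=
  if h : ∃ n : ℕ, (n : ℝ) = x then f h.choose else 0

/-- The exponential map `Exp f = exp(f 1) * ∑ (f - f 1)^k / k!` of the Dirichlet ring.
Since `(f - f 1)^k` has order `≥ 2^k`, the value of the infinite series at `n` equals the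
value of the partial sum up to `k = n`. -/
noncomputable def ExpA (f : ArithmeticFunction ℂ) : ArithmeticFunction ℂ :=
  ⟨fun n => Complex.exp (f 1) *
      ((∑ k ∈ Finset.range (n + 1),
        CC ((Nat.factorial k : ℂ)⁻¹) * (f - CC (f 1)) ^ k) n), by simp⟩

/-- The `p`-basic derivation `(∂_p f) n = v_p (n p) • f (n p)`. -/
noncomputable def DP (p : ℕ) (f : ArithmeticFunction ℂ) : ArithmeticFunction ℂ :=
  ⟨fun n => (padicValNat p (n * p) : ℂ) * f (n * p), by simp⟩

/-- The log-derivation `(∂_L f) n = log n * f n`. -/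
noncomputable def DL (f : ArithmeticFunction ℂ) : ArithmeticFunction ℂ :=
  ⟨fun n => (Real.log n : ℂ) * f n, by simp⟩

/-- The pointwise multiplication operator `𝔪_g`. -/
noncomputable def MG (g f : ArithmeticFunction ℂ) : ArithmeticFunction ℂ :=
  ⟨fun n => g n * f n, by simp⟩

/-- Integer powers `𝔪_g^i` of the pointwise multiplication operator:
`(𝔪_g^i f) n = (g n)^i * f n`. -/
noncomputable def MGi (g : ArithmeticFunction ℂ) (i : ℤ) (f : ArithmeticFunction ℂ) :
    ArithmeticFunction ℂ := ⟨fun n => g n ^ i * f n, by simp⟩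

/-- `D` is a (ℂ-linear) derivation of the ring of arithmetic functions
under Dirichlet convolution. -/
def IsDerivationA (D : ArithmeticFunction ℂ → ArithmeticFunction ℂ) : Prop :=
  (∀ f g, D (f + g) = D f + D g) ∧
  (∀ (c : ℂ) (f), D (CC c * f) = CC c * D f) ∧
  (∀ f g, D (f * g) = D f * g + f * D g)

/-- Convergence of a sequence of arithmetic functions in the norm topology. -/
def TendstoA (s : ℕ → ArithmeticFunction ℂ) (l : ArithmeticFunction ℂ) : Prop :=
  Filter.Tendsto (fun m => nrm (s m - l)) Filter.atTop (nhds 0)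

/-- (Sequential) continuity of a map in the norm topology, which for this
ultrametric is equivalent to continuity. -/
def ContinuousA (D : ArithmeticFunction ℂ → ArithmeticFunction ℂ) : Prop :=
  ∀ (s : ℕ → ArithmeticFunction ℂ) (l), TendstoA s l → TendstoA (fun m => D (s m)) (D l)

/-- The indicator function `e_m` of the singleton `{m}`. -/
noncomputable def En (m : ℕ) : ArithmeticFunction ℂ :=
  ⟨fun n => if 0 < n ∧ n = m then 1 else 0, by simp⟩

/-- The constant one arithmetic function `𝟙`. -/
noncomputable def OneA : ArithmeticFunction ℂ := ⟨fun n => if n = 0 then 0 else 1, by simp⟩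

/-- The ℂ-algebra structure of the ring of arithmetic functions, via `CC`. -/
noncomputable instance : Algebra ℂ (ArithmeticFunction ℂ) := CC.toAlgebra

/-- The `i`-th pointwise power `Ω^⟨i⟩ : n ↦ Ω(n)^i` of the prime-counting function `Ω`
(number of prime factors with multiplicity); `Ω^⟨0⟩ = 𝟙`. -/
noncomputable def OmPow (i : ℕ) : ArithmeticFunction ℂ :=
  ⟨fun n => if n = 0 then 0 else ((ArithmeticFunction.cardFactors n : ℕ) : ℂ) ^ i, by simp⟩

/-- Evaluation at `1` as a ring homomorphism on the Dirichlet ring. -/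
noncomputable def eval1 : ArithmeticFunction ℂ →+* ℂ where
  toFun f := f 1
  map_one' := by simp [ArithmeticFunction.one_apply]
  map_zero' := by simp
  map_add' f g := by simp
  map_mul' f g := by
    simp only [mul_apply]
    rw [show Nat.divisorsAntidiagonal 1 = {(1,1)} from rfl]
    simp

lemma sumA_apply {ι : Type*} (s : Finset ι) (f : ι → ArithmeticFunction ℂ) (n : ℕ) :
    (∑ i ∈ s, f i) n = ∑ i ∈ s, f i n := by
  induction s using Finset.cons_induction with
  | empty => simp
  | cons a s ha ih => simp only [Finset.sum_cons, ArithmeticFunction.add_apply, ih]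

lemma CC_mul_apply (c : ℂ) (f : ArithmeticFunction ℂ) (n : ℕ) :
    (CC c * f) n = c * f n := by
  rcases Nat.eq_zero_or_pos n with rfl | hn
  · simp
  rw [mul_apply, Finset.sum_eq_single (1, n)]
  · rfl
  · rintro ⟨d, e⟩ hde hne
    rw [Nat.mem_divisorsAntidiagonal] at hde
    have hd : d ≠ 1 := by rintro rfl; exact hne (by rw [← hde.1]; simp)
    show CC c d * f e = 0
    show (if d = 1 then c else 0) * f e = 0
    simp [hd]
  · intro h
    exact absurd (Nat.mem_divisorsAntidiagonal.mpr ⟨by simp, hn.ne'⟩) h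

lemma DP2_iter_one (j : ℕ) (f : ArithmeticFunction ℂ) :
    ((DP 2)^[j] f) 1 = (Nat.factorial j : ℂ) * f (2 ^ j) := by
  induction j generalizing f with
  | zero => simp
  | succ j ih =>
    rw [Function.iterate_succ, Function.comp_apply, ih]
    show (Nat.factorial j : ℂ) * ((padicValNat 2 (2 ^ j * 2) : ℂ) * f (2 ^ j * 2)) = _
    rw [← pow_succ, padicValNat.prime_pow]
    push_cast [Nat.factorial_succ]
    ring

lemma OmPow_two_pow (i j : ℕ) : OmPow i (2 ^ j) = ((j : ℂ)) ^ i := by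
  show (if (2 : ℕ) ^ j = 0 then (0 : ℂ) else ((ArithmeticFunction.cardFactors (2 ^ j) : ℕ) : ℂ) ^ i) = _
  rw [if_neg (by positivity), ArithmeticFunction.cardFactors_apply_prime_pow Nat.prime_two]

/-- The pointwise powers `Ω^⟨0⟩ = 𝟙, Ω^⟨1⟩, Ω^⟨2⟩, …` are linearly independent over `ℂ`;
concretely, the value at `1` of the Wronskian `det (∂_2^j Ω^⟨i⟩)` equals
`(∏ j!) * det (j^i)`, which is nonzero. -/
theorem stmt19 :
    (∀ (k : ℕ) (c : Fin (k + 1) → ℂ), (∑ i, CC (c i) * OmPow (i : ℕ)) = 0 → ∀ i, c i = 0) ∧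
    (∀ k : ℕ,
      (Matrix.det (Matrix.of fun i j : Fin (k + 1) => (DP 2)^[(j : ℕ)] (OmPow (i : ℕ)))) 1
        = (∏ j ∈ Finset.range (k + 1), (Nat.factorial j : ℂ)) *
            Matrix.det (Matrix.of fun i j : Fin (k + 1) => ((j : ℕ) : ℂ) ^ (i : ℕ)) ∧
      (Matrix.det (Matrix.of fun i j : Fin (k + 1) => (DP 2)^[(j : ℕ)] (OmPow (i : ℕ)))) 1 ≠ 0) := by
  constructor
  · intro k c hsum i
    have hdet : (Matrix.vandermonde fun j : Fin (k + 1) => ((j : ℕ) : ℂ)).det ≠ 0 := by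
      rw [Matrix.det_vandermonde_ne_zero_iff]
      intro a b hab
      have := Nat.cast_injective (R := ℂ) hab
      exact Fin.val_injective this
    have hmv : (Matrix.vandermonde fun j : Fin (k + 1) => ((j : ℕ) : ℂ)).mulVec c = 0 := by
      funext j
      have h2 : (∑ i, CC (c i) * OmPow (i : ℕ)) (2 ^ (j : ℕ)) = 0 := by rw [hsum]; simp
      rw [sumA_apply] at h2
      simp only [CC_mul_apply, OmPow_two_pow] at h2
      simpa [Matrix.mulVec, Matrix.vandermonde, dotProduct, mul_comm] using h2
    exact congrFun (Matrix.eq_zero_of_mulVec_eq_zero hdet hmv) i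
  · intro k
    have hdet : (Matrix.vandermonde fun j : Fin (k + 1) => ((j : ℕ) : ℂ)).det ≠ 0 := by
      rw [Matrix.det_vandermonde_ne_zero_iff]
      intro a b hab
      exact Fin.val_injective (Nat.cast_injective (R := ℂ) hab)
    have key : (Matrix.det (Matrix.of fun i j : Fin (k + 1) => (DP 2)^[(j : ℕ)] (OmPow (i : ℕ)))) 1
        = (∏ j ∈ Finset.range (k + 1), (Nat.factorial j : ℂ)) *
            Matrix.det (Matrix.of fun i j : Fin (k + 1) => ((j : ℕ) : ℂ) ^ (i : ℕ)) := by
      have := RingHom.map_det eval1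
        (Matrix.of fun i j : Fin (k + 1) => (DP 2)^[(j : ℕ)] (OmPow (i : ℕ)))
      show eval1 _ = _
      rw [this]
      have hmap : (Matrix.of fun i j : Fin (k + 1) => (DP 2)^[(j : ℕ)] (OmPow (i : ℕ))).map eval1
          = Matrix.of fun i j : Fin (k + 1) =>
              ((Nat.factorial (j : ℕ) : ℂ)) * (((j : ℕ) : ℂ) ^ (i : ℕ)) := by
        ext i j
        show eval1 ((DP 2)^[(j : ℕ)] (OmPow (i : ℕ))) = _
        show ((DP 2)^[(j : ℕ)] (OmPow (i : ℕ))) 1 = _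
        rw [DP2_iter_one, OmPow_two_pow]; rfl
      rw [RingHom.mapMatrix_apply, hmap]
      have h3 := Matrix.det_mul_row (fun j : Fin (k + 1) => ((Nat.factorial (j : ℕ)) : ℂ))
        (Matrix.of fun i j : Fin (k + 1) => ((j : ℕ) : ℂ) ^ (i : ℕ))
      rw [Fin.prod_univ_eq_prod_range (fun j => (Nat.factorial j : ℂ))] at h3
      exact h3
    refine ⟨key, ?_⟩
    rw [key]
    apply mul_ne_zero
    · exact Finset.prod_ne_zero_iff.mpr fun j _ => Nat.cast_ne_zero.mpr (Nat.factorial_ne_zero j)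
    · have : (Matrix.of fun i j : Fin (k + 1) => ((j : ℕ) : ℂ) ^ (i : ℕ))
          = (Matrix.vandermonde fun j : Fin (k + 1) => ((j : ℕ) : ℂ)).transpose := by
        ext i j; rfl
      rw [this, Matrix.det_transpose]
      exact hdet
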